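/- Let r ≥ 1 be an integer and consider a coordinate change q̃ = φ(q) on a curve with p̃_r = p_r · (dφ/dq)^{−r} (the transformation rule for coefficients of 1-forms of weight r). Then p̃_r^{1−r} · (dp̃_r ∧ dq̃)^r = p_r^{1−r} · (dp_r ∧ dq)^r, i.e., the expression p_r^{1−r}(dp_r ∧ dq)^r is invariant under coordinate changes, as formal meromorphic 2-forms of weight r. -/
import Mathlib


/-- Invariance of `p^{1-r} (dp ∧ dq)^r` under a coordinate change
`q̃ = φ(q)`, `p̃ = p · (φ'(q))^{-r}` : denoting by `D` the Jacobian
determinant `∂(p̃, q̃)/∂(p, q)` (the coefficient of `dp̃ ∧ dq̃` relative to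
`dp ∧ dq`), one has `p̃^{1-r} · D^r = p^{1-r}`. -/
theorem stmt_10 (r : ℕ) (hr : 1 ≤ r) (φ : ℂ → ℂ) (q p : ℂ)
    (hφ : DifferentiableAt ℂ φ q) (hφ' : deriv φ q ≠ 0) (hp : p ≠ 0) :
    (p * (deriv φ q) ^ (-(r : ℤ))) ^ (1 - (r : ℤ)) *
        (deriv (fun t : ℂ => t * (deriv φ q) ^ (-(r : ℤ))) p * deriv φ q
          - deriv (fun t : ℂ => p * (deriv φ t) ^ (-(r : ℤ))) q
              * deriv (fun _ : ℂ => φ q) p) ^ r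
      = p ^ (1 - (r : ℤ)) := by
  set c := deriv φ q with hc
  have h1 : deriv (fun t : ℂ => t * c ^ (-(r : ℤ))) p = c ^ (-(r : ℤ)) := by
    simp
  have h2 : deriv (fun _ : ℂ => φ q) p = 0 := deriv_const _ _
  rw [h1, h2, mul_zero, sub_zero, mul_zpow]
  have h3 : c ^ (-(r : ℤ)) * c = c ^ (1 - (r : ℤ)) := by
    rw [sub_eq_neg_add, zpow_add₀ hφ', zpow_one]
  rw [h3]
  have h4 : (c ^ (1 - (r : ℤ))) ^ r = c ^ ((1 - (r : ℤ)) * r) := by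
    rw [← zpow_natCast (c ^ (1 - (r : ℤ))) r, ← zpow_mul]
  have h5 : (c ^ (-(r : ℤ))) ^ (1 - (r : ℤ)) = c ^ (-(r : ℤ) * (1 - (r : ℤ))) := by
    rw [← zpow_mul]
  rw [h4, h5, mul_assoc, ← zpow_add₀ hφ']
  have : -(r : ℤ) * (1 - (r : ℤ)) + (1 - (r : ℤ)) * r = 0 := by ring
  rw [this, zpow_zero, mul_one]
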